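/- Let ψ be a unit speed curve in ℝ³ with κ > 0, θ = ∫κ ds, m ≠ 0, n = m/√(1+m²), and suppose τ(s) = m κ(s)·θ(s)/√(1 - m²θ(s)²) on an interval where |mθ| < 1. Then the vector d = n·(θ T + N + (1/m)·√(1 - m²θ²)·B) is constant along the curve, and ⟨N, d⟩ = n, so ψ is a slant helix. -/

import Mathlib

open Real
open scoped RealInnerProductSpace

/-- Conversely, if τ = m κ θ / √(1 - m²θ²) with θ = ∫₀ˢ κ, |mθ| < 1,
m ≠ 0 and n = m/√(1+m²), then d = n (θ T + N + (1/m)√(1-m²θ²) B) is a constant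
vector along the curve and ⟨N, d⟩ = n, so ψ is a slant helix. -/
theorem slant_helix_converse
    (ψ T N B : ℝ → EuclideanSpace ℝ (Fin 3)) (κ τ : ℝ → ℝ) (n m : ℝ)
    (hκpos : ∀ s, 0 < κ s) (hκc : Continuous κ)
    (hψ : ∀ s, HasDerivAt ψ (T s) s)
    (hT : ∀ s, HasDerivAt T (κ s • N s) s)
    (hN : ∀ s, HasDerivAt N (-(κ s) • T s + τ s • B s) s)
    (hB : ∀ s, HasDerivAt B (-(τ s) • N s) s)
    (hTn : ∀ s, ‖T s‖ = 1) (hNn : ∀ s, ‖N s‖ = 1) (hBn : ∀ s, ‖B s‖ = 1)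
    (hm : m ≠ 0) (hn : n = m / Real.sqrt (1 + m ^ 2))
    (hsmall : ∀ s, |m * (∫ u in (0:ℝ)..s, κ u)| < 1)
    (hτ : ∀ s, τ s = m * κ s * (∫ u in (0:ℝ)..s, κ u) /
        Real.sqrt (1 - m ^ 2 * (∫ u in (0:ℝ)..s, κ u) ^ 2)) :
    (∀ s₁ s₂,
      n • ((∫ u in (0:ℝ)..s₁, κ u) • T s₁ + N s₁ +
          (m⁻¹ * Real.sqrt (1 - m ^ 2 * (∫ u in (0:ℝ)..s₁, κ u) ^ 2)) • B s₁)
      =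
      n • ((∫ u in (0:ℝ)..s₂, κ u) • T s₂ + N s₂ +
          (m⁻¹ * Real.sqrt (1 - m ^ 2 * (∫ u in (0:ℝ)..s₂, κ u) ^ 2)) • B s₂)) ∧
    (∀ s, ⟪N s,
      n • ((∫ u in (0:ℝ)..s, κ u) • T s + N s +
          (m⁻¹ * Real.sqrt (1 - m ^ 2 * (∫ u in (0:ℝ)..s, κ u) ^ 2)) • B s)⟫ = n) := by
  set θ : ℝ → ℝ := fun s => ∫ u in (0:ℝ)..s, κ u with hθdef
  have hθ : ∀ s, HasDerivAt θ (κ s) s := fun s =>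
    intervalIntegral.integral_hasDerivAt_right (hκc.intervalIntegrable _ _)
      (hκc.stronglyMeasurableAtFilter _ _) hκc.continuousAt
  have hpos : ∀ s, 0 < 1 - m ^ 2 * θ s ^ 2 := by
    intro s
    have h := abs_lt.1 (hsmall s)
    nlinarith [h.1, h.2]
  set r : ℝ → ℝ := fun s => Real.sqrt (1 - m ^ 2 * θ s ^ 2) with hrdef
  have hrpos : ∀ s, 0 < r s := fun s => Real.sqrt_pos.2 (hpos s)
  have hrsq : ∀ s, r s ^ 2 = 1 - m ^ 2 * θ s ^ 2 := fun s =>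
    Real.sq_sqrt (hpos s).le
  have hr : ∀ s, HasDerivAt r (-(m ^ 2 * θ s * κ s) / r s) s := by
    intro s
    have h1 : HasDerivAt (fun t => 1 - m ^ 2 * θ t ^ 2) (-(2 * m ^ 2 * θ s * κ s)) s := by
      have := (((hθ s).pow 2).const_mul (m ^ 2)).const_sub 1
      refine this.congr_deriv ?_
      ring
    have h2 := h1.sqrt (ne_of_gt (hpos s))
    convert h2 using 1
    rw [hrdef]
    field_simp
  set f : ℝ → EuclideanSpace ℝ (Fin 3) :=
    fun s => θ s • T s + N s + (m⁻¹ * r s) • B s with hfdef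
  have hf : ∀ s, HasDerivAt f 0 s := by
    intro s
    have h := (((hθ s).smul (hT s)).add (hN s)).add
      (((hr s).const_mul m⁻¹).smul (hB s))
    refine h.congr_deriv ?_
    have hr0 : r s ≠ 0 := (hrpos s).ne'
    have hτs : τ s = m * κ s * θ s / r s := hτ s
    rw [hτs]
    match_scalars <;> field_simp <;> ring
  have hconst : ∀ s₁ s₂, f s₁ = f s₂ := by
    intro s₁ s₂
    exact is_const_of_deriv_eq_zero (fun s => (hf s).differentiableAt)
      (fun s => (hf s).deriv) s₁ s₂
  -- orthogonality
  have hTT : ∀ s, ⟪T s, T s⟫ = 1 := fun s => by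
    rw [real_inner_self_eq_norm_sq, hTn]; norm_num
  have hNN : ∀ s, ⟪N s, N s⟫ = 1 := fun s => by
    rw [real_inner_self_eq_norm_sq, hNn]; norm_num
  have hderiv_const : ∀ (g : ℝ → ℝ) (c : ℝ), (∀ s, g s = c) → ∀ {g' s}, HasDerivAt g g' s → g' = 0 := by
    intro g c hg g' s hgd
    have : g = fun _ => c := funext hg
    rw [this] at hgd
    exact hgd.unique (hasDerivAt_const _ _)
  have hTN : ∀ s, ⟪T s, N s⟫ = 0 := by
    intro s
    have key := (hT s).inner ℝ (hT s)
    have h0 := hderiv_const _ 1 hTT key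
    rw [real_inner_smul_right, real_inner_smul_left, real_inner_comm (N s) (T s)] at h0
    have h1 : κ s * ⟪N s, T s⟫ = 0 := by linarith
    rcases mul_eq_zero.1 h1 with h | h
    · exact absurd h (hκpos s).ne'
    · rw [real_inner_comm]; exact h
  have hτNB : ∀ s, τ s * ⟪N s, B s⟫ = 0 := by
    intro s
    have key := (hB s).inner ℝ (hB s)
    have h0 := hderiv_const _ 1 (fun s => by
      rw [real_inner_self_eq_norm_sq, hBn]; norm_num) key
    rw [real_inner_smul_right, real_inner_smul_left, real_inner_comm (N s) (B s)] at h0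
    linarith
  have hθ0 : θ 0 = 0 := by simp [hθdef]
  have hθmono : StrictMono θ := by
    apply strictMono_of_deriv_pos
    intro s
    rw [(hθ s).deriv]
    exact hκpos s
  have hθne : ∀ s, s ≠ 0 → θ s ≠ 0 := by
    intro s hs
    rcases lt_or_gt_of_ne hs with h | h
    · have := hθmono h; rw [hθ0] at this; linarith
    · have := hθmono h; rw [hθ0] at this; linarith
  have hτne : ∀ s, s ≠ 0 → τ s ≠ 0 := by
    intro s hs
    rw [hτ s]
    have : m * κ s * θ s ≠ 0 :=
      mul_ne_zero (mul_ne_zero hm (hκpos s).ne') (hθne s hs)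
    exact div_ne_zero this (hrpos s).ne'
  have hNB : ∀ s, ⟪N s, B s⟫ = 0 := by
    have hne : ∀ s, s ≠ 0 → ⟪N s, B s⟫ = 0 := by
      intro s hs
      rcases mul_eq_zero.1 (hτNB s) with h | h
      · exact absurd h (hτne s hs)
      · exact h
    intro s
    rcases eq_or_ne s 0 with rfl | hs
    · -- continuity argument at 0
      have hcont : ContinuousAt (fun t => ⟪N t, B t⟫) 0 :=
        ((hN 0).differentiableAt.inner ℝ (hB 0).differentiableAt).continuousAt
      have h1 : Filter.Tendsto (fun t => ⟪N t, B t⟫) (nhdsWithin 0 {(0:ℝ)}ᶜ)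
          (nhds ⟪N 0, B 0⟫) := hcont.continuousWithinAt.tendsto
      have h2 : Filter.Tendsto (fun t => ⟪N t, B t⟫) (nhdsWithin 0 {(0:ℝ)}ᶜ)
          (nhds 0) := by
        refine Filter.Tendsto.congr' ?_ tendsto_const_nhds
        filter_upwards [self_mem_nhdsWithin] with t ht
        exact (hne t ht).symm
      exact tendsto_nhds_unique h1 h2
    · exact hne s hs
  refine ⟨fun s₁ s₂ => by rw [show ((θ s₁ • T s₁ + N s₁ + (m⁻¹ * r s₁) • B s₁) : EuclideanSpace ℝ (Fin 3)) = f s₁ from rfl, show ((θ s₂ • T s₂ + N s₂ + (m⁻¹ * r s₂) • B s₂) : EuclideanSpace ℝ (Fin 3)) = f s₂ from rfl, hconst s₁ s₂], ?_⟩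
  intro s
  have hNT : ⟪N s, T s⟫ = 0 := by rw [real_inner_comm]; exact hTN s
  rw [real_inner_smul_right, inner_add_right, inner_add_right, real_inner_smul_right,
    real_inner_smul_right, hNT, hNN, hNB]
  ring
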